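/- Let n ≥ 2, d > 0, and let (c_j)_{j≥1} be a square-summable sequence of reals with nonnegative integer weights d_j ≥ 0 such that Σ d_j c_j² < ∞. Define W_f = Σ_j (d_j - d) c_j² and W_u = Σ_j [d² + d_j(n + d_j - 2) - d(n + 2d - 2)]/(n + 2d - 2) · c_j². Then with κ = (1 + ⌊d⌋ - d)/(n + ⌊d⌋ + d - 1) ∈ (0,1), one has W_f ≤ (1-κ) W_u. -/

import Mathlib

/-- Spectral form of the epiperimetric inequality for harmonic functions. -/
theorem stmt_1 (n : ℕ) (hn : 2 ≤ n) (d : ℝ) (hd : 0 < d)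
    (c : ℕ → ℝ) (dj : ℕ → ℕ)
    (hc : Summable fun j => (c j) ^ 2)
    (hdc : Summable fun j => (dj j : ℝ) * (c j) ^ 2)
    (hWu : Summable fun j =>
      (d ^ 2 + (dj j : ℝ) * ((n : ℝ) + (dj j : ℝ) - 2) - d * ((n : ℝ) + 2 * d - 2)) /
        ((n : ℝ) + 2 * d - 2) * (c j) ^ 2) :
    0 < (1 + (⌊d⌋ : ℝ) - d) / ((n : ℝ) + (⌊d⌋ : ℝ) + d - 1) ∧
    (1 + (⌊d⌋ : ℝ) - d) / ((n : ℝ) + (⌊d⌋ : ℝ) + d - 1) < 1 ∧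
    (∑' j, ((dj j : ℝ) - d) * (c j) ^ 2) ≤
      (1 - (1 + (⌊d⌋ : ℝ) - d) / ((n : ℝ) + (⌊d⌋ : ℝ) + d - 1)) *
        ∑' j, (d ^ 2 + (dj j : ℝ) * ((n : ℝ) + (dj j : ℝ) - 2) - d * ((n : ℝ) + 2 * d - 2)) /
          ((n : ℝ) + 2 * d - 2) * (c j) ^ 2 := by
  have hn2 : (2 : ℝ) ≤ (n : ℝ) := by exact_mod_cast hn
  have hF0 : (0 : ℝ) ≤ (⌊d⌋ : ℝ) := by
    have : (0 : ℤ) ≤ ⌊d⌋ := Int.floor_nonneg.mpr hd.le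
    exact_mod_cast this
  have hFd : (⌊d⌋ : ℝ) ≤ d := Int.floor_le d
  have hdF : d < (⌊d⌋ : ℝ) + 1 := Int.lt_floor_add_one d
  have hD1 : (0 : ℝ) < (n : ℝ) + (⌊d⌋ : ℝ) + d - 1 := by linarith
  have hD2 : (0 : ℝ) < (n : ℝ) + 2 * d - 2 := by linarith
  set κ : ℝ := (1 + (⌊d⌋ : ℝ) - d) / ((n : ℝ) + (⌊d⌋ : ℝ) + d - 1) with hκ
  have hκ0 : 0 < κ := div_pos (by linarith) hD1
  have hκ1 : κ < 1 := by
    rw [hκ, div_lt_one hD1]; linarith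
  refine ⟨hκ0, hκ1, ?_⟩
  have hterm : ∀ j, ((dj j : ℝ) - d) * (c j) ^ 2 ≤
      (1 - κ) * ((d ^ 2 + (dj j : ℝ) * ((n : ℝ) + (dj j : ℝ) - 2) - d * ((n : ℝ) + 2 * d - 2)) /
        ((n : ℝ) + 2 * d - 2) * (c j) ^ 2) := by
    intro j
    set lam : ℝ := (dj j : ℝ) with hlam
    have hkey : 0 ≤ (lam - d) * (lam - (⌊d⌋ : ℝ) - 1) := by
      rcases le_or_gt ((dj j : ℤ)) ⌊d⌋ with h | h
      · have h1 : lam ≤ (⌊d⌋ : ℝ) := by rw [hlam]; exact_mod_cast h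
        exact mul_nonneg_of_nonpos_of_nonpos (by linarith) (by linarith)
      · have h1 : (⌊d⌋ : ℝ) + 1 ≤ lam := by
          rw [hlam]
          have : ⌊d⌋ + 1 ≤ (dj j : ℤ) := h
          exact_mod_cast this
        exact mul_nonneg (by linarith) (by linarith)
    have hcoef : lam - d ≤ (1 - κ) *
        ((d ^ 2 + lam * ((n : ℝ) + lam - 2) - d * ((n : ℝ) + 2 * d - 2)) /
          ((n : ℝ) + 2 * d - 2)) := by
      have heq : (1 - κ) *
          ((d ^ 2 + lam * ((n : ℝ) + lam - 2) - d * ((n : ℝ) + 2 * d - 2)) /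
            ((n : ℝ) + 2 * d - 2)) =
          (lam - d) * (lam + (n : ℝ) + d - 2) / ((n : ℝ) + (⌊d⌋ : ℝ) + d - 1) := by
        have h1k : 1 - (1 + (⌊d⌋ : ℝ) - d) / ((n : ℝ) + (⌊d⌋ : ℝ) + d - 1) =
            ((n : ℝ) + 2 * d - 2) / ((n : ℝ) + (⌊d⌋ : ℝ) + d - 1) := by
          rw [eq_div_iff hD1.ne', sub_mul, div_mul_cancel₀ _ hD1.ne']; ring
        have hN : d ^ 2 + lam * ((n : ℝ) + lam - 2) - d * ((n : ℝ) + 2 * d - 2) =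
            (lam - d) * (lam + (n : ℝ) + d - 2) := by ring
        rw [hκ, h1k, hN, div_mul_div_comm, mul_comm ((n : ℝ) + 2 * d - 2),
          mul_div_mul_right _ _ hD2.ne']
      rw [heq, le_div_iff₀ hD1]
      nlinarith [hkey]
    calc (lam - d) * (c j) ^ 2
        ≤ ((1 - κ) * ((d ^ 2 + lam * ((n : ℝ) + lam - 2) - d * ((n : ℝ) + 2 * d - 2)) /
            ((n : ℝ) + 2 * d - 2))) * (c j) ^ 2 :=
          mul_le_mul_of_nonneg_right hcoef (sq_nonneg _)
      _ = _ := by ring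
  have hL : Summable fun j => ((dj j : ℝ) - d) * (c j) ^ 2 := by
    have : (fun j => ((dj j : ℝ) - d) * (c j) ^ 2) =
        fun j => (dj j : ℝ) * (c j) ^ 2 - d * (c j) ^ 2 := by
      funext j; ring
    rw [this]
    exact hdc.sub (hc.mul_left d)
  rw [← tsum_mul_left]
  exact Summable.tsum_le_tsum hterm hL (hWu.mul_left _)
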